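/- Let H be a bipartite matching covered graph and u a vertex of H of degree at least three. If f1 and f2 are two edges incident with u that lie together in a common 4-cycle of H, then at least one of f1 and f2 is removable in H. -/

import Mathlib

open SimpleGraph Set

universe u
variable {V : Type u}

/-- Number of odd components of a graph. -/
noncomputable def oddComps (G : SimpleGraph V) : ℕ :=
  Nat.card {c : G.ConnectedComponent // Odd (Nat.card c.supp)}

/-- `S` is a barrier of `G`: the number of odd components of `G − S` equals `|S|`. -/
def IsBarrier (G : SimpleGraph V) (S : Set V) : Prop :=
  oddComps (G.induce Sᶜ) = S.ncard

/-- `G` has a perfect matching. -/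
def HasPM (G : SimpleGraph V) : Prop :=
  ∃ M : Subgraph G, M.IsPerfectMatching

/-- `G` is matching covered. -/
def MatchingCovered (G : SimpleGraph V) : Prop :=
  G.Connected ∧ G.edgeSet.Nonempty ∧
    ∀ e ∈ G.edgeSet, ∃ M : Subgraph G, M.IsPerfectMatching ∧ e ∈ M.edgeSet

/-- An edge `e` of a matching covered graph `G` is removable. -/
def Removable (G : SimpleGraph V) (e : Sym2 V) : Prop :=
  e ∈ G.edgeSet ∧ MatchingCovered (G.deleteEdges {e})

/-- `G` is 3-connected. -/
def ThreeConnected (G : SimpleGraph V) : Prop :=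
  4 ≤ Nat.card V ∧ ∀ S : Set V, S.ncard ≤ 2 → (G.induce Sᶜ).Connected

/-- A brick. -/
def IsBrick (G : SimpleGraph V) : Prop :=
  ThreeConnected G ∧ ∀ x y : V, x ≠ y → HasPM (G.induce ({x, y} : Set V)ᶜ)

/-- neighbours outside `S` of vertices of `S`. -/
def Nbrs (G : SimpleGraph V) (S : Set V) : Set V :=
  {v | v ∉ S ∧ ∃ u ∈ S, G.Adj u v}

/-- factor-critical graph. -/
def FactorCritical (G : SimpleGraph V) : Prop :=
  ∀ v : V, HasPM (G.induce ({v} : Set V)ᶜ)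

/-- `(U, W)` is a bipartition of `G`. -/
def IsBipartition (G : SimpleGraph V) (U W : Set V) : Prop :=
  Disjoint U W ∧ U ∪ W = Set.univ ∧
    ∀ a b : V, G.Adj a b → (a ∈ U ∧ b ∈ W) ∨ (a ∈ W ∧ b ∈ U)


section PMF
variable {G : SimpleGraph V} {M : G.Subgraph}

noncomputable def pmf (M : G.Subgraph) (h : M.IsPerfectMatching) : V → V :=
  fun v => ((Subgraph.isPerfectMatching_iff (M := M)).mp h v).choose

lemma pmf_adj (h : M.IsPerfectMatching) (v : V) : M.Adj v (pmf M h v) :=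
  ((Subgraph.isPerfectMatching_iff (M := M)).mp h v).choose_spec.1

lemma pmf_unique (h : M.IsPerfectMatching) {v w : V} (hw : M.Adj v w) : w = pmf M h v :=
  (((Subgraph.isPerfectMatching_iff (M := M)).mp h v).choose_spec.2 w hw).symm ▸ rfl

lemma pmf_invol (h : M.IsPerfectMatching) (v : V) : pmf M h (pmf M h v) = v :=
  (pmf_unique h ((pmf_adj h v).symm)).symm

lemma pmf_adj' (h : M.IsPerfectMatching) (v : V) : G.Adj v (pmf M h v) :=
  M.adj_sub (pmf_adj h v)

lemma pmf_inj (h : M.IsPerfectMatching) : Function.Injective (pmf M h) := by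
  intro x y hxy
  have := pmf_invol h x
  rw [hxy, pmf_invol h y] at this
  exact this.symm

lemma pmf_edge_mem (h : M.IsPerfectMatching) {x y : V} (hxy : s(x,y) ∈ M.edgeSet) :
    y = pmf M h x := pmf_unique h (Subgraph.mem_edgeSet.mp hxy)
end PMF

section MK
variable {G : SimpleGraph V}

def mkPM (G : SimpleGraph V) (m : V → V) (hadj : ∀ v, G.Adj v (m v))
    (hinv : ∀ v, m (m v) = v) : G.Subgraph where
  verts := Set.univ
  Adj v w := w = m v ∧ G.Adj v w
  adj_sub h := h.2
  edge_vert _ := trivial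
  symm := by
    constructor
    intro v w ⟨h1, h2⟩
    exact ⟨by rw [h1, hinv], h2.symm⟩

lemma mkPM_isPM (G : SimpleGraph V) (m : V → V) (hadj : ∀ v, G.Adj v (m v))
    (hinv : ∀ v, m (m v) = v) : (mkPM G m hadj hinv).IsPerfectMatching := by
  rw [Subgraph.isPerfectMatching_iff]
  intro v
  exact ⟨m v, ⟨rfl, hadj v⟩, fun w hw => hw.1⟩

lemma mkPM_edge (G : SimpleGraph V) (m : V → V) (hadj : ∀ v, G.Adj v (m v))
    (hinv : ∀ v, m (m v) = v) (v : V) : s(v, m v) ∈ (mkPM G m hadj hinv).edgeSet :=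
  Subgraph.mem_edgeSet.mpr ⟨rfl, hadj v⟩
end MK

section NF
variable [Fintype V] [DecidableEq V]

open Classical in
noncomputable def Nf (G : SimpleGraph V) (S : Finset V) : Finset V :=
  Finset.univ.filter fun v => ∃ x ∈ S, G.Adj x v

lemma mem_Nf {G : SimpleGraph V} {S : Finset V} {v : V} :
    v ∈ Nf G S ↔ ∃ x ∈ S, G.Adj x v := by
  classical simp [Nf]

noncomputable def tF (A : Set V) : Finset V := A.toFinite.toFinset

@[simp] lemma mem_tF {A : Set V} {x : V} : x ∈ tF A ↔ x ∈ A :=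
  A.toFinite.mem_toFinset

lemma card_le_Nf {G : SimpleGraph V} {M : G.Subgraph} (h : M.IsPerfectMatching)
    (S : Finset V) : S.card ≤ (Nf G S).card :=
  Finset.card_le_card_of_injOn (pmf M h)
    (fun x hx => mem_Nf.mpr ⟨x, hx, pmf_adj' h x⟩) ((pmf_inj h).injOn)

lemma walk_closed {G : SimpleGraph V} {C : Set V}
    (hC : ∀ v ∈ C, ∀ x, G.Adj v x → x ∈ C) :
    ∀ {v w : V}, G.Walk v w → v ∈ C → w ∈ C := by
  intro v w p
  induction p with
  | nil => exact id
  | cons h p ih => exact fun hv => ih (hC _ hv _ h)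

lemma surplus {G : SimpleGraph V} {A B : Set V} (hdisj : Disjoint A B)
    (hcross : ∀ x y, G.Adj x y → (x ∈ A ∧ y ∈ B) ∨ (x ∈ B ∧ y ∈ A))
    (hmc : MatchingCovered G) {S : Finset V} (hS : ↑S ⊆ A) (hne : S.Nonempty)
    {w : V} (hw : w ∈ A) (hwS : w ∉ S) : S.card + 1 ≤ (Nf G S).card := by
  classical
  obtain ⟨e0, he0⟩ := hmc.2.1
  obtain ⟨M0, hM0, -⟩ := hmc.2.2 e0 he0
  have hle : S.card ≤ (Nf G S).card := card_le_Nf hM0 S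
  by_contra hcon
  have hcards : (Nf G S).card = S.card := by omega
  -- every perfect matching maps Nf G S back into S
  have key : ∀ (M : G.Subgraph) (h : M.IsPerfectMatching),
      ∀ t ∈ Nf G S, pmf M h t ∈ S := by
    intro M h t ht
    have himg : S.image (pmf M h) = Nf G S := by
      apply Finset.eq_of_subset_of_card_le
      · intro y hy
        obtain ⟨x, hx, rfl⟩ := Finset.mem_image.mp hy
        exact mem_Nf.mpr ⟨x, hx, pmf_adj' h x⟩
      · rw [Finset.card_image_of_injective _ (pmf_inj h), hcards]
    rw [← himg] at ht
    obtain ⟨x, hx, hxe⟩ := Finset.mem_image.mp ht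
    rw [← hxe, pmf_invol h]
    exact hx
  -- neighbors of Nf G S must stay in S, or we get a forbidden edge
  by_cases hedge : ∃ t x, t ∈ Nf G S ∧ G.Adj t x ∧ x ∉ S
  · obtain ⟨t, x, ht, hadj, hx⟩ := hedge
    obtain ⟨M, hM, hmem⟩ := hmc.2.2 s(t, x) (G.mem_edgeSet.mpr hadj)
    have : x = pmf M hM t := pmf_edge_mem hM hmem
    exact hx (this ▸ key M hM t ht)
  · push_neg at hedge
    -- the set S ∪ Nf G S is closed under adjacency
    set C : Set V := {v | v ∈ S ∨ v ∈ Nf G S} with hC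
    have hclosed : ∀ v ∈ C, ∀ x, G.Adj v x → x ∈ C := by
      intro v hv x hadj
      rcases hv with hv | hv
      · exact Or.inr (mem_Nf.mpr ⟨v, hv, hadj⟩)
      · exact Or.inl (hedge v x hv hadj)
    obtain ⟨s0, hs0⟩ := hne
    have hreach : G.Reachable s0 w := hmc.1.preconnected s0 w
    obtain ⟨p⟩ := hreach
    have hwC : w ∈ C := walk_closed hclosed p (Or.inl hs0)
    rcases hwC with h | h
    · exact hwS h
    · obtain ⟨x, hx, hadj⟩ := mem_Nf.mp h
      rcases hcross x w hadj with ⟨-, hwB⟩ | ⟨hxB, -⟩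
      · exact (hdisj.ne_of_mem hw hwB) rfl
      · exact (hdisj.ne_of_mem (hS hx) hxB) rfl
end NF

section CONN
variable {G : SimpleGraph V}

lemma reach_of_reach_del {u a : V}
    (hr : (G.deleteEdges {s(u,a)}).Reachable u a) :
    ∀ {x y : V}, G.Walk x y → (G.deleteEdges {s(u,a)}).Reachable x y := by
  intro x y p
  induction p with
  | nil => exact Reachable.refl _
  | @cons v w y h p ih =>
    refine Reachable.trans ?_ ih
    by_cases hc : s(v, w) = s(u, a)
    · rw [Sym2.eq_iff] at hc
      rcases hc with ⟨rfl, rfl⟩ | ⟨rfl, rfl⟩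
      · exact hr
      · exact hr.symm
    · exact Adj.reachable (by simp [h, hc])

lemma connected_del {u a : V} (hc : G.Connected)
    (hr : (G.deleteEdges {s(u,a)}).Reachable u a) :
    (G.deleteEdges {s(u,a)}).Connected := by
  rw [connected_iff] at hc ⊢
  refine ⟨fun x y => ?_, hc.2⟩
  obtain ⟨p⟩ := hc.1 x y
  exact reach_of_reach_del hr p
end CONN

section CARD
variable [Fintype V] [DecidableEq V]

lemma cardAB {G : SimpleGraph V} {A B : Set V} (hdisj : Disjoint A B)
    (hcross : ∀ x y, G.Adj x y → (x ∈ A ∧ y ∈ B) ∨ (x ∈ B ∧ y ∈ A))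
    {M : G.Subgraph} (h : M.IsPerfectMatching) : (tF A).card = (tF B).card := by
  classical
  have hmap : ∀ {X Y : Set V}, (∀ x y, G.Adj x y → (x ∈ X ∧ y ∈ Y) ∨ (x ∈ Y ∧ y ∈ X)) →
      Disjoint X Y → (tF X).card ≤ (tF Y).card := by
    intro X Y hcr hd
    apply Finset.card_le_card_of_injOn (pmf M h) _ ((pmf_inj h).injOn)
    intro x hx
    rw [Finset.mem_coe, mem_tF] at hx ⊢
    rcases hcr x (pmf M h x) (pmf_adj' h x) with ⟨-, hy⟩ | ⟨hxY, -⟩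
    · exact hy
    · exact absurd rfl (hd.ne_of_mem hx hxY)
  exact le_antisymm (hmap hcross hdisj)
    (hmap (fun x y hxy => (hcross x y hxy).symm) hdisj.symm)
end CARD

section HALL
variable [Fintype V] [DecidableEq V]

lemma hallPM {G' : SimpleGraph V} {A B : Set V} (hdisj : Disjoint A B)
    (hcov : A ∪ B = Set.univ)
    (hcross : ∀ x y, G'.Adj x y → (x ∈ A ∧ y ∈ B) ∨ (x ∈ B ∧ y ∈ A))
    {c d : V} (hc : c ∈ A) (hd : d ∈ B) (hcd : G'.Adj c d)
    (hcard : (tF A).card = (tF B).card)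
    (hhall : ∀ X : Finset V, X ⊆ (tF A).erase c →
      X.card ≤ ((Nf G' X).erase d).card) :
    ∃ M : G'.Subgraph, M.IsPerfectMatching ∧ s(c, d) ∈ M.edgeSet := by
  classical
  have hcd' : c ≠ d := fun h => hdisj.ne_of_mem hc (h ▸ hd) rfl
  set Af : Finset V := (tF A).erase c with hAf
  set Bf : Finset V := (tF B).erase d with hBf
  have hsideB : ∀ {x y : V}, x ∈ A → G'.Adj x y → y ∈ B := by
    intro x y hx hxy
    rcases hcross x y hxy with ⟨-, h⟩ | ⟨hx', -⟩
    · exact h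
    · exact absurd rfl (hdisj.ne_of_mem hx hx')
  -- apply Hall's theorem
  set t : {x // x ∈ Af} → Finset V := fun x => (Nf G' {(x : V)}).erase d with ht
  have hhall' : ∀ s : Finset {x // x ∈ Af}, s.card ≤ (s.biUnion t).card := by
    intro s
    have hbi : s.biUnion t = (Nf G' (s.image Subtype.val)).erase d := by
      ext v
      simp only [Finset.mem_biUnion, Finset.mem_erase, mem_Nf, Finset.mem_image,
        Finset.mem_singleton, ht]
      constructor
      · rintro ⟨x, hx, hvd, y, rfl, hadj⟩
        exact ⟨hvd, ↑x, ⟨x, hx, rfl⟩, hadj⟩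
      · rintro ⟨hvd, y, ⟨x, hx, rfl⟩, hadj⟩
        exact ⟨x, hx, hvd, ↑x, rfl, hadj⟩
    rw [hbi, ← Finset.card_image_of_injective s Subtype.val_injective]
    exact hhall _ (by rintro v hv; obtain ⟨x, -, rfl⟩ := Finset.mem_image.mp hv; exact x.2)
  obtain ⟨f, hfinj, hfmem⟩ := (Finset.all_card_le_biUnion_card_iff_exists_injective t).mp hhall'
  have hfB : ∀ x, f x ∈ Bf := by
    intro x
    have h1 := hfmem x
    rw [ht] at h1
    obtain ⟨hfd, h2⟩ := Finset.mem_erase.mp h1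
    obtain ⟨y, hy, hadj⟩ := mem_Nf.mp h2
    rw [Finset.mem_singleton] at hy
    subst hy
    have hxA : (x : V) ∈ A := mem_tF.mp (Finset.mem_of_mem_erase x.2)
    exact Finset.mem_erase.mpr ⟨hfd, mem_tF.mpr (hsideB hxA hadj)⟩
  -- f is surjective onto Bf
  have hcAf : c ∈ tF A := mem_tF.mpr hc
  have hdBf : d ∈ tF B := mem_tF.mpr hd
  have hcards : Fintype.card {x // x ∈ Af} = Bf.card := by
    rw [Fintype.card_coe, hAf, hBf, Finset.card_erase_of_mem hcAf,
      Finset.card_erase_of_mem hdBf, hcard]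
  have hsurj : ∀ y ∈ Bf, ∃ x, f x = y := by
    have himg : Finset.univ.image f = Bf := by
      apply Finset.eq_of_subset_of_card_le
      · intro y hy
        obtain ⟨x, -, rfl⟩ := Finset.mem_image.mp hy
        exact hfB x
      · rw [Finset.card_image_of_injective _ hfinj, Finset.card_univ, hcards]
    intro y hy
    rw [← himg] at hy
    obtain ⟨x, -, hx⟩ := Finset.mem_image.mp hy
    exact ⟨x, hx⟩
  -- define the matching involution
  set g : V → V := fun v => if h : ∃ x : {x // x ∈ Af}, f x = v then ↑h.choose else v
    with hg
  have hgBf : ∀ v ∈ Bf, ∃ hx : (g v : V) ∈ Af, f ⟨g v, hx⟩ = v := by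
    intro v hv
    have hex : ∃ x : {x // x ∈ Af}, f x = v := hsurj v hv
    have : g v = ↑hex.choose := by rw [hg]; exact dif_pos hex
    rw [this]
    exact ⟨hex.choose.2, by rw [Subtype.eta]; exact hex.choose_spec⟩
  have hgf : ∀ x : {x // x ∈ Af}, g (f x) = ↑x := by
    intro x
    have hex : ∃ x' : {x' // x' ∈ Af}, f x' = f x := ⟨x, rfl⟩
    have : g (f x) = ↑hex.choose := by rw [hg]; exact dif_pos hex
    rw [this, hfinj hex.choose_spec]
  set m : V → V := fun v =>
    if v = c then d else if v = d then c else
    if h : v ∈ Af then f ⟨v, h⟩ else g v with hm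
  have hmc' : m c = d := by simp [hm]
  have hmd : m d = c := by simp [hm, hcd'.symm]
  have hfxne : ∀ x : {x // x ∈ Af}, f x ≠ c ∧ f x ≠ d ∧ f x ∉ Af := by
    intro x
    have h1 := hfB x
    obtain ⟨hfd, hfB'⟩ := Finset.mem_erase.mp h1
    have hfBset : f x ∈ B := mem_tF.mp hfB'
    refine ⟨fun h => hdisj.ne_of_mem hc (h ▸ hfBset) rfl, hfd, fun h => ?_⟩
    have : f x ∈ A := mem_tF.mp (Finset.mem_of_mem_erase h)
    exact hdisj.ne_of_mem this hfBset rfl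
  have hmAf : ∀ (v : V) (h : v ∈ Af), m v = f ⟨v, h⟩ := by
    intro v h
    have hvA : v ∈ A := mem_tF.mp (Finset.mem_of_mem_erase h)
    have hvc : v ≠ c := (Finset.mem_erase.mp h).1
    have hvd : v ≠ d := fun hh => hdisj.ne_of_mem hvA (hh ▸ hd) rfl
    simp [hm, hvc, hvd, h]
  have hmBf : ∀ (v : V), v ∈ Bf → m v = g v := by
    intro v hv
    obtain ⟨hvd, hvB'⟩ := Finset.mem_erase.mp hv
    have hvB : v ∈ B := mem_tF.mp hvB'
    have hvc : v ≠ c := fun hh => hdisj.ne_of_mem hc (hh ▸ hvB) rfl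
    have hvAf : v ∉ Af := fun h =>
      hdisj.ne_of_mem (mem_tF.mp (Finset.mem_of_mem_erase h)) hvB rfl
    simp [hm, hvc, hvd, hvAf]
  -- case exhaustion
  have hcases : ∀ v : V, v = c ∨ v = d ∨ v ∈ Af ∨ v ∈ Bf := by
    intro v
    have hv : v ∈ A ∪ B := hcov ▸ Set.mem_univ v
    rcases hv with hv | hv
    · by_cases hvc : v = c
      · exact Or.inl hvc
      · exact Or.inr (Or.inr (Or.inl (Finset.mem_erase.mpr ⟨hvc, mem_tF.mpr hv⟩)))
    · by_cases hvd : v = d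
      · exact Or.inr (Or.inl hvd)
      · exact Or.inr (Or.inr (Or.inr (Finset.mem_erase.mpr ⟨hvd, mem_tF.mpr hv⟩)))
  have hadjf : ∀ x : {x // x ∈ Af}, G'.Adj ↑x (f x) := by
    intro x
    have h1 := hfmem x
    obtain ⟨-, h2⟩ := Finset.mem_erase.mp h1
    obtain ⟨y, hy, hadj⟩ := mem_Nf.mp h2
    rw [Finset.mem_singleton] at hy
    subst hy
    exact hadj
  have hadjm : ∀ v, G'.Adj v (m v) := by
    intro v
    rcases hcases v with rfl | rfl | h | h
    · rw [hmc']; exact hcd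
    · rw [hmd]; exact hcd.symm
    · rw [hmAf v h]; exact hadjf ⟨v, h⟩
    · rw [hmBf v h]
      obtain ⟨hx, hfx⟩ := hgBf v h
      have := hadjf ⟨g v, hx⟩
      rw [hfx] at this
      exact this.symm
  have hinvm : ∀ v, m (m v) = v := by
    intro v
    rcases hcases v with rfl | rfl | h | h
    · rw [hmc', hmd]
    · rw [hmd, hmc']
    · rw [hmAf v h, hmBf _ (hfB ⟨v, h⟩), hgf ⟨v, h⟩]
    · rw [hmBf v h]
      obtain ⟨hx, hfx⟩ := hgBf v h
      rw [hmAf _ hx, hfx]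
  refine ⟨mkPM G' m hadjm hinvm, mkPM_isPM G' m hadjm hinvm, ?_⟩
  have := mkPM_edge G' m hadjm hinvm c
  rwa [hmc'] at this
end HALL

section EXTRACT
variable [Fintype V] [DecidableEq V]

lemma extract {H : SimpleGraph V} {A B : Set V} (hdisj : Disjoint A B)
    (hcov : A ∪ B = Set.univ)
    (hcross : ∀ x y, H.Adj x y → (x ∈ A ∧ y ∈ B) ∨ (x ∈ B ∧ y ∈ A))
    (hmc : MatchingCovered H) {u a : V} (hu : u ∈ A) (hua : H.Adj u a)
    (hnr : ¬ MatchingCovered (H.deleteEdges {s(u,a)}))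
    (hconn' : (H.deleteEdges {s(u,a)}).Connected)
    (hedge' : (H.deleteEdges {s(u,a)}).edgeSet.Nonempty) :
    ∃ S : Finset V, ↑S ⊆ A ∧ u ∈ S ∧ (Nf H S).card = S.card + 1 ∧
      ∀ x ∈ S, H.Adj x a → x = u := by
  classical
  set G' := H.deleteEdges {s(u,a)} with hG'
  have hle : G' ≤ H := SimpleGraph.deleteEdges_le _
  have hcross' : ∀ x y, G'.Adj x y → (x ∈ A ∧ y ∈ B) ∨ (x ∈ B ∧ y ∈ A) :=
    fun x y h => hcross x y (hle h)
  have haB : a ∈ B := by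
    rcases hcross u a hua with ⟨-, h⟩ | ⟨h, -⟩
    · exact h
    · exact absurd rfl (hdisj.ne_of_mem hu h)
  -- get an edge in no perfect matching of G'
  have hbad : ∃ e ∈ G'.edgeSet, ∀ M : G'.Subgraph, M.IsPerfectMatching →
      e ∉ M.edgeSet := by
    by_contra hcon
    push_neg at hcon
    exact hnr ⟨hconn', hedge', fun e he => hcon e he⟩
  obtain ⟨e, he, hno⟩ := hbad
  -- orient it with the A-side first
  obtain ⟨c, d, hcd, hcA, hdB, hno'⟩ : ∃ c d, G'.Adj c d ∧ c ∈ A ∧ d ∈ B ∧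
      ∀ M : G'.Subgraph, M.IsPerfectMatching → s(c,d) ∉ M.edgeSet := by
    induction e with
    | h x y =>
      have hadj : G'.Adj x y := he
      rcases hcross' x y hadj with ⟨hx, hy⟩ | ⟨hx, hy⟩
      · exact ⟨x, y, hadj, hx, hy, hno⟩
      · exact ⟨y, x, hadj.symm, hy, hx, fun M hM hmem =>
          hno M hM (by rwa [Sym2.eq_swap] at hmem)⟩
  -- a perfect matching of H exists
  obtain ⟨e0, he0⟩ := hmc.2.1
  obtain ⟨M0, hM0, -⟩ := hmc.2.2 e0 he0
  have hcard : (tF A).card = (tF B).card := cardAB hdisj hcross hM0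
  -- Hall's condition fails for G' minus c, d
  obtain ⟨X, hXsub, hXcard⟩ : ∃ X : Finset V, X ⊆ (tF A).erase c ∧
      ((Nf G' X).erase d).card < X.card := by
    by_contra hcon
    push_neg at hcon
    obtain ⟨M, hM, hmem⟩ := hallPM hdisj hcov hcross' hcA hdB hcd hcard hcon
    exact hno' M hM hmem
  have hXA : ↑X ⊆ A := fun x hx => mem_tF.mp (Finset.mem_of_mem_erase (hXsub hx))
  have hXne : X.Nonempty := by
    rcases Finset.eq_empty_or_nonempty X with rfl | h
    · simp at hXcard
    · exact h
  have hXc : c ∉ X := fun h => (Finset.mem_erase.mp (hXsub h)).1 rfl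
  -- cardinality bounds
  have hsub1 : Nf G' X ⊆ Nf H X := by
    intro v hv
    obtain ⟨x, hx, hadj⟩ := mem_Nf.mp hv
    exact mem_Nf.mpr ⟨x, hx, hle hadj⟩
  have haX : a ∉ X := fun h => absurd rfl (hdisj.ne_of_mem (hXA h) haB)
  have hsub2 : Nf H X ⊆ insert a (Nf G' X) := by
    intro v hv
    obtain ⟨x, hx, hadj⟩ := mem_Nf.mp hv
    by_cases hc : s(x, v) = s(u, a)
    · rw [Sym2.eq_iff] at hc
      rcases hc with ⟨rfl, rfl⟩ | ⟨rfl, rfl⟩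
      · exact Finset.mem_insert_self _ _
      · exact absurd hx haX
    · exact Finset.mem_insert_of_mem (mem_Nf.mpr ⟨x, hx, by
        rw [hG', SimpleGraph.deleteEdges_adj]
        exact ⟨hadj, by simpa using hc⟩⟩)
  have hNfH_le : (Nf H X).card ≤ X.card + 1 := by
    have h1 := Finset.card_le_card hsub2
    have h2 := Finset.card_insert_le a (Nf G' X)
    have h3 := Finset.pred_card_le_card_erase (s := Nf G' X) (a := d)
    omega
  have hsurp : X.card + 1 ≤ (Nf H X).card :=
    surplus hdisj hcross hmc hXA hXne hcA hXc
  have hNfH_eq : (Nf H X).card = X.card + 1 := le_antisymm hNfH_le hsurp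
  -- the neighbourhood in G' is strictly smaller, forced through a
  have hG'lt : (Nf G' X).card < (Nf H X).card := by
    have h3 := Finset.pred_card_le_card_erase (s := Nf G' X) (a := d)
    omega
  obtain ⟨v, hvH, hvG'⟩ := Finset.exists_of_ssubset (Finset.ssubset_iff_of_subset hsub1 |>.mpr
    (by
      by_contra hcon
      push_neg at hcon
      have : Nf H X ⊆ Nf G' X := hcon
      exact absurd (Finset.card_le_card this) (by omega)))
  -- the lost vertex must be `a`, reached only through `u`
  obtain ⟨x, hx, hadj⟩ := mem_Nf.mp hvH
  have hxv : s(x, v) = s(u, a) := by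
    by_contra hc
    exact hvG' (mem_Nf.mpr ⟨x, hx, by
      rw [hG', SimpleGraph.deleteEdges_adj]
      exact ⟨hadj, by simpa using hc⟩⟩)
  rw [Sym2.eq_iff] at hxv
  rcases hxv with ⟨h1, h2⟩ | ⟨h1, h2⟩
  swap
  · exact absurd (h1 ▸ hx) haX
  · rw [h1] at hx
    rw [h2] at hvG'
    refine ⟨X, hXA, hx, hNfH_eq, ?_⟩
    intro x' hx' hadj'
    by_contra hne
    have hxa' : s(x', a) ≠ s(u, a) := by
      intro h
      rw [Sym2.eq_iff] at h
      rcases h with ⟨h3, -⟩ | ⟨h3, -⟩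
      · exact hne h3
      · exact absurd (h3 ▸ hx') haX
    exact hvG' (mem_Nf.mpr ⟨x', hx', by
      rw [hG', SimpleGraph.deleteEdges_adj]
      exact ⟨hadj', by simpa using hxa'⟩⟩)
end EXTRACT

section CORE
variable [Fintype V] [DecidableEq V]

lemma core (H : SimpleGraph V) [DecidableRel H.Adj]
    (A B : Set V) (hdisj : Disjoint A B) (hcov : A ∪ B = Set.univ)
    (hcross : ∀ x y, H.Adj x y → (x ∈ A ∧ y ∈ B) ∨ (x ∈ B ∧ y ∈ A))
    (hmc : MatchingCovered H) (u a b : V) (hu : u ∈ A) (hdeg : 3 ≤ H.degree u)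
    (ha : H.Adj u a) (hb : H.Adj u b) (hab : a ≠ b) (z : V) (hz : z ≠ u)
    (hza : H.Adj a z) (hzb : H.Adj b z)
    (hnr1 : ¬ MatchingCovered (H.deleteEdges {s(u,a)}))
    (hnr2 : ¬ MatchingCovered (H.deleteEdges {s(u,b)})) : False := by
  classical
  have sideB : ∀ {x y : V}, x ∈ A → H.Adj x y → y ∈ B := by
    intro x y hx hxy
    rcases hcross x y hxy with ⟨-, h⟩ | ⟨hx', -⟩
    · exact h
    · exact absurd rfl (hdisj.ne_of_mem hx hx')
  have sideA : ∀ {x y : V}, x ∈ B → H.Adj x y → y ∈ A := by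
    intro x y hx hxy
    rcases hcross x y hxy with ⟨hx', -⟩ | ⟨-, h⟩
    · exact absurd rfl (hdisj.ne_of_mem hx' hx)
    · exact h
  have haB : a ∈ B := sideB hu ha
  have hbB : b ∈ B := sideB hu hb
  have hzA : z ∈ A := sideA haB hza
  -- small sym2 disequalities
  have hub_ua : s(u, b) ≠ s(u, a) := by
    intro h; rw [Sym2.eq_iff] at h
    rcases h with ⟨-, h2⟩ | ⟨h1, -⟩
    · exact hab h2.symm
    · exact ha.ne h1
  have hbz_ua : s(b, z) ≠ s(u, a) := by
    intro h; rw [Sym2.eq_iff] at h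
    rcases h with ⟨h1, -⟩ | ⟨-, h2⟩
    · exact hb.ne h1.symm
    · exact hz h2
  have hza_ua : s(z, a) ≠ s(u, a) := by
    intro h; rw [Sym2.eq_iff] at h
    rcases h with ⟨h1, -⟩ | ⟨h1, -⟩
    · exact hz h1
    · exact hza.ne h1.symm
  have hua_ub : s(u, a) ≠ s(u, b) := by
    intro h; rw [Sym2.eq_iff] at h
    rcases h with ⟨-, h2⟩ | ⟨h1, -⟩
    · exact hab h2
    · exact hb.ne h1
  have hbz_ub : s(b, z) ≠ s(u, b) := by
    intro h; rw [Sym2.eq_iff] at h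
    rcases h with ⟨h1, -⟩ | ⟨-, h2⟩
    · exact hb.ne h1.symm
    · exact hz h2
  have haz_ub : s(a, z) ≠ s(u, b) := by
    intro h; rw [Sym2.eq_iff] at h
    rcases h with ⟨h1, -⟩ | ⟨h1, -⟩
    · exact ha.ne h1.symm
    · exact hab h1
  -- connectivity of the two edge-deleted graphs
  have hconn1 : (H.deleteEdges {s(u,a)}).Connected := by
    apply connected_del hmc.1
    have e1 : (H.deleteEdges {s(u,a)}).Adj u b := by
      rw [SimpleGraph.deleteEdges_adj]; exact ⟨hb, by simpa using hub_ua⟩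
    have e2 : (H.deleteEdges {s(u,a)}).Adj b z := by
      rw [SimpleGraph.deleteEdges_adj]; exact ⟨hzb, by simpa using hbz_ua⟩
    have e3 : (H.deleteEdges {s(u,a)}).Adj z a := by
      rw [SimpleGraph.deleteEdges_adj]; exact ⟨hza.symm, by simpa using hza_ua⟩
    exact e1.reachable.trans (e2.reachable.trans e3.reachable)
  have hconn2 : (H.deleteEdges {s(u,b)}).Connected := by
    apply connected_del hmc.1
    have e1 : (H.deleteEdges {s(u,b)}).Adj u a := by
      rw [SimpleGraph.deleteEdges_adj]; exact ⟨ha, by simpa using hua_ub⟩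
    have e2 : (H.deleteEdges {s(u,b)}).Adj a z := by
      rw [SimpleGraph.deleteEdges_adj]; exact ⟨hza, by simpa using haz_ub⟩
    have e3 : (H.deleteEdges {s(u,b)}).Adj z b := by
      rw [SimpleGraph.deleteEdges_adj]; exact ⟨hzb.symm, by
        simpa [Sym2.eq_swap] using hbz_ub⟩
    exact e1.reachable.trans (e2.reachable.trans e3.reachable)
  have hedge1 : (H.deleteEdges {s(u,a)}).edgeSet.Nonempty := by
    refine ⟨s(u, b), ?_⟩
    rw [SimpleGraph.mem_edgeSet, SimpleGraph.deleteEdges_adj]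
    exact ⟨hb, by simpa using hub_ua⟩
  have hedge2 : (H.deleteEdges {s(u,b)}).edgeSet.Nonempty := by
    refine ⟨s(u, a), ?_⟩
    rw [SimpleGraph.mem_edgeSet, SimpleGraph.deleteEdges_adj]
    exact ⟨ha, by simpa using hua_ub⟩
  -- extract the two tight sets
  obtain ⟨S1, hS1A, huS1, hNf1, huniq1⟩ :=
    extract hdisj hcov hcross hmc hu ha hnr1 hconn1 hedge1
  obtain ⟨S2, hS2A, huS2, hNf2, huniq2⟩ :=
    extract hdisj hcov hcross hmc hu hb hnr2 hconn2 hedge2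
  have hzS1 : z ∉ S1 := fun h => hz (huniq1 z h hza.symm)
  have hzS2 : z ∉ S2 := fun h => hz (huniq2 z h hzb.symm)
  set I : Finset V := S1 ∩ S2 with hI
  set J : Finset V := S1 ∪ S2 with hJ
  have hJA : ↑J ⊆ A := by
    rw [hJ, Finset.coe_union]
    exact Set.union_subset hS1A hS2A
  have huJ : u ∈ J := Finset.mem_union_left _ huS1
  have hzJ : z ∉ J := fun h => (Finset.mem_union.mp h).elim hzS1 hzS2
  have hsurpJ : J.card + 1 ≤ (Nf H J).card :=
    surplus hdisj hcross hmc hJA ⟨u, huJ⟩ hzA hzJ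
  have hNfunion : Nf H J = Nf H S1 ∪ Nf H S2 := by
    ext v
    simp only [mem_Nf, Finset.mem_union, hJ]
    constructor
    · rintro ⟨x, hx | hx, hadj⟩
      · exact Or.inl ⟨x, hx, hadj⟩
      · exact Or.inr ⟨x, hx, hadj⟩
    · rintro (⟨x, hx, hadj⟩ | ⟨x, hx, hadj⟩)
      · exact ⟨x, Or.inl hx, hadj⟩
      · exact ⟨x, Or.inr hx, hadj⟩
  have hNfinter : Nf H I ⊆ Nf H S1 ∩ Nf H S2 := by
    intro v hv
    obtain ⟨x, hx, hadj⟩ := mem_Nf.mp hv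
    rw [hI, Finset.mem_inter] at hx
    exact Finset.mem_inter.mpr ⟨mem_Nf.mpr ⟨x, hx.1, hadj⟩, mem_Nf.mpr ⟨x, hx.2, hadj⟩⟩
  have hIE1 : I.card + J.card = S1.card + S2.card :=
    Finset.card_inter_add_card_union S1 S2
  have hIE2 : (Nf H S1 ∩ Nf H S2).card + (Nf H S1 ∪ Nf H S2).card
      = (Nf H S1).card + (Nf H S2).card :=
    Finset.card_inter_add_card_union _ _
  have hNfI_le : (Nf H I).card ≤ I.card + 1 := by
    have h1 := Finset.card_le_card hNfinter
    rw [hNfunion] at hsurpJ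
    omega
  -- the third neighbour of u
  obtain ⟨c', hc'adj, hc'ab⟩ : ∃ c', H.Adj u c' ∧ c' ∉ ({a, b} : Finset V) := by
    by_contra hcon
    push_neg at hcon
    have hsub : H.neighborFinset u ⊆ {a, b} := by
      intro x hx
      exact hcon x ((H.mem_neighborFinset u x).mp hx)
    have h1 : H.degree u ≤ ({a, b} : Finset V).card := by
      rw [← SimpleGraph.card_neighborFinset_eq_degree]
      exact Finset.card_le_card hsub
    have h2 : ({a, b} : Finset V).card ≤ 2 := Finset.card_insert_le a {b} |>.trans (by simp)
    omega
  have hc'a : c' ≠ a := fun h => hc'ab (by simp [h])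
  have hc'b : c' ≠ b := fun h => hc'ab (by simp [h])
  obtain ⟨M', hM', hmem'⟩ := hmc.2.2 s(u, c') (H.mem_edgeSet.mpr hc'adj)
  have hm'u : pmf M' hM' u = c' := (pmf_edge_mem hM' hmem').symm
  have huI : u ∈ I := Finset.mem_inter.mpr ⟨huS1, huS2⟩
  have haNfI : a ∈ Nf H I := mem_Nf.mpr ⟨u, huI, ha⟩
  have hbNfI : b ∈ Nf H I := mem_Nf.mpr ⟨u, huI, hb⟩
  have hmap : ∀ x ∈ I, pmf M' hM' x ∈ ((Nf H I).erase a).erase b := by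
    intro x hx
    obtain ⟨hxS1, hxS2⟩ := Finset.mem_inter.mp hx
    refine Finset.mem_erase.mpr ⟨?_, Finset.mem_erase.mpr ⟨?_, ?_⟩⟩
    · intro h
      have hadj : H.Adj x b := h ▸ pmf_adj' hM' x
      have hxu : x = u := huniq2 x hxS2 hadj
      rw [hxu] at h
      exact hc'b (hm'u ▸ h)
    · intro h
      have hadj : H.Adj x a := h ▸ pmf_adj' hM' x
      have hxu : x = u := huniq1 x hxS1 hadj
      rw [hxu] at h
      exact hc'a (hm'u ▸ h)
    · exact mem_Nf.mpr ⟨x, hx, pmf_adj' hM' x⟩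
  have hinj := Finset.card_le_card_of_injOn (pmf M' hM') hmap ((pmf_inj hM').injOn)
  have hbe : b ∈ (Nf H I).erase a := Finset.mem_erase.mpr ⟨Ne.symm hab, hbNfI⟩
  have hc1 : ((Nf H I).erase a).card = (Nf H I).card - 1 :=
    Finset.card_erase_of_mem haNfI
  have hc2 : (((Nf H I).erase a).erase b).card = ((Nf H I).erase a).card - 1 :=
    Finset.card_erase_of_mem hbe
  have hIpos : 0 < I.card := Finset.card_pos.mpr ⟨u, huI⟩
  have hNfIpos : 2 ≤ (Nf H I).card := by
    have : ({a, b} : Finset V) ⊆ Nf H I := by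
      intro x hx
      rcases Finset.mem_insert.mp hx with rfl | hx
      · exact haNfI
      · rw [Finset.mem_singleton.mp hx]; exact hbNfI
    calc 2 = ({a, b} : Finset V).card := by rw [Finset.card_insert_of_notMem (by simpa using hab), Finset.card_singleton]
    _ ≤ _ := Finset.card_le_card this
  omega
end CORE

/-- two edges at a vertex of degree at least three lying in a
common 4-cycle of a bipartite matching covered graph cannot both be
nonremovable. -/
theorem stmt11 [Fintype V] [DecidableEq V] (H : SimpleGraph V)
    [DecidableRel H.Adj] (U W : Set V)
    (hbip : IsBipartition H U W) (hmc : MatchingCovered H)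
    (u a b : V) (hdeg : 3 ≤ H.degree u)
    (ha : H.Adj u a) (hb : H.Adj u b) (hab : a ≠ b)
    (z : V) (hz : z ≠ u) (hza : H.Adj a z) (hzb : H.Adj b z) :
    Removable H s(u, a) ∨ Removable H s(u, b) := by
  obtain ⟨hdisj, hcov, hcross⟩ := hbip
  by_contra hcon
  push_neg at hcon
  obtain ⟨h1, h2⟩ := hcon
  have hnr1 : ¬ MatchingCovered (H.deleteEdges {s(u,a)}) := fun h =>
    h1 ⟨H.mem_edgeSet.mpr ha, h⟩
  have hnr2 : ¬ MatchingCovered (H.deleteEdges {s(u,b)}) := fun h =>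
    h2 ⟨H.mem_edgeSet.mpr hb, h⟩
  rcases hcross u a ha with ⟨huU, -⟩ | ⟨huW, -⟩
  · exact core H U W hdisj hcov hcross hmc u a b huU hdeg ha hb hab z hz hza hzb hnr1 hnr2
  · exact core H W U hdisj.symm (by rw [Set.union_comm]; exact hcov)
      (fun x y h => (hcross x y h).symm) hmc u a b huW hdeg ha hb hab z hz hza hzb hnr1 hnr2
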